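/- Let G = (V, E) be a finite undirected graph with a labeling λ : E → Finset ℕ, and let D be the strict reachability relation of the temporal graph (G, λ) (i.e., u can reach v iff there is a path in G whose edges carry strictly increasing labels taken from their label sets). If {u,v} and {v,w} are edges of G with λ({u,v}) ≠ ∅ and λ({v,w}) ≠ ∅, and neither (u,w) nor (w,u) is in D, then there exists a single label α such that λ({u,v}) = λ({v,w}) = {α}. -/
import Mathlib


/-- Strict temporal reachability: `SReach lab u v t` means there is a walk from `u` to `v`
whose steps carry strictly increasing labels, arriving at time `t`. -/
inductive SReach {V : Type*} (lab : V → V → Finset ℕ) : V → V → ℕ → Prop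
  | single {u v : V} {t : ℕ} (h : t ∈ lab u v) : SReach lab u v t
  | cons {u v w : V} {t t' : ℕ} (h : SReach lab u v t) (h' : t' ∈ lab v w) (hlt : t < t') :
      SReach lab u w t'

/-- `u` can reach `v` via a strict temporal path. -/
def StrictReachable {V : Type*} (lab : V → V → Finset ℕ) (u v : V) : Prop :=
  ∃ t, SReach lab u v t

/-- Non-strict temporal reachability: labels are non-decreasing along the walk. -/
inductive NSReach {V : Type*} (lab : V → V → Finset ℕ) : V → V → ℕ → Prop
  | single {u v : V} {t : ℕ} (h : t ∈ lab u v) : NSReach lab u v t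
  | cons {u v w : V} {t t' : ℕ} (h : NSReach lab u v t) (h' : t' ∈ lab v w) (hle : t ≤ t') :
      NSReach lab u w t'

/-- `u` can reach `v` via a non-strict temporal path. -/
def NonStrictReachable {V : Type*} (lab : V → V → Finset ℕ) (u v : V) : Prop :=
  ∃ t, NSReach lab u v t

/-- Two adjacent labeled edges whose non-shared endpoints are mutually unreachable
(in the strict reachability relation) must both carry the same unique single label. -/
theorem stmt0 {V : Type*} [Fintype V] (G : SimpleGraph V) (lab : V → V → Finset ℕ)
    (hsymm : ∀ x y, lab x y = lab y x)
    (hsupp : ∀ x y, (lab x y).Nonempty → G.Adj x y)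
    (u v w : V) (huv : G.Adj u v) (hvw : G.Adj v w) (huw : u ≠ w)
    (h1 : (lab u v).Nonempty) (h2 : (lab v w).Nonempty)
    (hno1 : ¬ StrictReachable lab u w) (hno2 : ¬ StrictReachable lab w u) :
    ∃ α : ℕ, lab u v = {α} ∧ lab v w = {α} := by
  have key : ∀ a ∈ lab u v, ∀ b ∈ lab v w, a = b := by
    intro a ha b hb
    rcases lt_trichotomy a b with h | h | h
    · exact absurd ⟨b, SReach.cons (SReach.single ha) hb h⟩ hno1
    · exact h
    · refine absurd ⟨a, SReach.cons (SReach.single (by rwa [hsymm w v]))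
        (by rwa [hsymm v u]) h⟩ hno2
  obtain ⟨a, ha⟩ := h1
  obtain ⟨b, hb⟩ := h2
  obtain rfl := key a ha b hb
  refine ⟨a, ?_, ?_⟩
  · apply Finset.eq_singleton_iff_unique_mem.mpr ⟨ha, fun x hx => key x hx a hb⟩
  · apply Finset.eq_singleton_iff_unique_mem.mpr ⟨hb, fun x hx => (key a ha x hx).symm⟩
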